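/- Let W be a wreath-like product of A and B over an action B ↷ I, with B torsion-free and all point stabilizers Stab_B(i) almost malnormal in B. Then for every nontrivial element a of the base A^{(I)} and every i in the support of a, the image under ε of the centralizer C_W(a) is contained in Stab_B(i). -/
import Mathlib

/-- `W` is a wreath-like product of `A₀` and `B` corresponding to the action `B ↷ I`. -/
def IsWreathLike {W B : Type*} [Group W] [Group B] (I : Type*) [MulAction B I]
    (A₀ : Type*) [Group A₀] (ε : W →* B) (A : I → Subgroup W) : Prop :=
  Function.Surjective ε ∧
  (∀ i, Nonempty (↥(A i) ≃* A₀)) ∧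
  (⨆ i, A i) = ε.ker ∧
  iSupIndep A ∧
  (∀ i j, i ≠ j → ∀ x ∈ A i, ∀ y ∈ A j, Commute x y) ∧
  (∀ (w : W) (i : I), (A i).map (MulAut.conj w).toMonoidHom = A (ε w • i))

private lemma biSup_smul_reindex {W B : Type*} [Group W] [Group B] {I : Type*} [MulAction B I]
    (A : I → Subgroup W) (g : B) (j : I) :
    (⨆ k ∈ ({j}ᶜ : Set I), A (g • k)) = ⨆ k ∈ ({g • j}ᶜ : Set I), A k := by
  apply le_antisymm
  · refine iSup₂_le fun k hk => le_iSup₂_of_le (g • k) ?_ le_rfl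
    intro h
    exact hk (by
      rw [Set.mem_singleton_iff] at h ⊢
      exact smul_left_cancel g h)
  · refine iSup₂_le fun k hk => le_iSup₂_of_le (g⁻¹ • k) ?_ ?_
    · intro h
      rw [Set.mem_singleton_iff] at h
      exact hk (by rw [Set.mem_singleton_iff, ← h, smul_inv_smul])
    · rw [smul_inv_smul]

/-- let `W ∈ WR(A₀, B ↷ I)` with `B` torsion-free and all point stabilizers
`Stab_B(i)` almost malnormal in `B` (i.e. `Stab_B(i) ∩ g Stab_B(i) g⁻¹` is finite for
all `g ∉ Stab_B(i)`).  For every nontrivial element `a` of the base `A^{(I)} = ker ε`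
and every `i` in the support of `a` (encoded: `a` does not lie in the restricted direct
product of the summands `A j`, `j ≠ i`), the image under `ε` of the centralizer
`C_W(a)` is contained in `Stab_B(i)`. -/
theorem centralizer_image_le_stabilizer
    {W B A₀ : Type*} [Group W] [Group B] [Group A₀] {I : Type*} [MulAction B I]
    (ε : W →* B) (A : I → Subgroup W) (h : IsWreathLike I A₀ ε A)
    (htf : ∀ b : B, b ≠ 1 → ¬IsOfFinOrder b)
    (hmal : ∀ (i : I), ∀ g : B, g ∉ MulAction.stabilizer B i →
      (((MulAction.stabilizer B i ⊓
          (MulAction.stabilizer B i).map (MulAut.conj g).toMonoidHom : Subgroup B)) :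
        Set B).Finite)
    (a : W) (ha : a ∈ ε.ker) (hane : a ≠ 1)
    (i : I) (hi : a ∉ ⨆ j ∈ ({i}ᶜ : Set I), A j) :
    ∀ c ∈ Subgroup.centralizer ({a} : Set W), ε c ∈ MulAction.stabilizer B i := by
  obtain ⟨hsurj, -, hker, hindep, hcomm, hconj⟩ := h
  classical
  intro c hc
  set K : I → Subgroup W := fun j => ⨆ k ∈ ({j}ᶜ : Set I), A k with hKdef
  -- conjugation moves `K j` to `K (ε w • j)`
  have hmapK : ∀ (w : W) (j : I), (K j).map (MulAut.conj w).toMonoidHom = K (ε w • j) := by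
    intro w j
    simp only [hKdef, Subgroup.map_iSup]
    simp only [hconj]
    exact biSup_smul_reindex A (ε w) j
  -- if `w` centralizes `a` and `a ∉ K j` then `a ∉ K (ε w • j)`
  have hstep : ∀ w : W, w * a * w⁻¹ = a → ∀ j : I, a ∉ K j → a ∉ K (ε w • j) := by
    intro w hw j hj hmem
    rw [← hmapK w j] at hmem
    obtain ⟨x, hx, hxa⟩ := hmem
    apply hj
    have hxa' : w * x * w⁻¹ = a := hxa
    have : x = a := by
      have : w * x * w⁻¹ = w * a * w⁻¹ := hxa'.trans hw.symm
      have := mul_right_cancel this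
      exact mul_left_cancel this
    rwa [this] at hx
  -- `c^n` centralizes `a`
  have hcn : ∀ n : ℕ, c ^ n * a * (c ^ n)⁻¹ = a := by
    intro n
    have hmem : c ^ n ∈ Subgroup.centralizer ({a} : Set W) := pow_mem hc n
    have := (Subgroup.mem_centralizer_iff.mp hmem) a rfl
    rw [← this]
    group
  -- the orbit of `i` under `ε c` stays in the "support" set `{j | a ∉ K j}`
  have horb : ∀ n : ℕ, a ∉ K ((ε c) ^ n • i) := by
    intro n
    have := hstep (c ^ n) (hcn n) i hi
    rwa [map_pow] at this
  -- find a finite set supporting `a`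
  have hdir : Directed (· ≤ ·) (fun S : Finset I => ⨆ k ∈ S, A k) := by
    intro S T
    refine ⟨S ∪ T, iSup₂_le fun k hk => le_iSup₂ (f := fun k (_ : k ∈ S ∪ T) => A k) k (Finset.mem_union_left _ hk),
      iSup₂_le fun k hk => le_iSup₂ (f := fun k (_ : k ∈ S ∪ T) => A k) k (Finset.mem_union_right _ hk)⟩
  have hmem : a ∈ ⨆ S : Finset I, ⨆ k ∈ S, A k := by
    have hle : (⨆ k, A k) ≤ ⨆ S : Finset I, ⨆ k ∈ S, A k :=
      iSup_le fun k => le_iSup_of_le {k} (le_iSup₂ (f := fun j (_ : j ∈ ({k} : Finset I)) => A j) k (Finset.mem_singleton_self k))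
    exact hle (hker ▸ ha)
  obtain ⟨S, hS⟩ := (Subgroup.mem_iSup_of_directed hdir).mp hmem
  -- every point of the orbit lies in `S`
  have horbS : ∀ n : ℕ, (ε c) ^ n • i ∈ S := by
    intro n
    by_contra hn
    apply horb n
    refine (iSup₂_le fun k hk => ?_ : (⨆ k ∈ S, A k) ≤ K ((ε c) ^ n • i)) hS
    refine le_iSup₂ (f := fun j (_ : j ∈ ({(ε c) ^ n • i}ᶜ : Set I)) => A j) k ?_
    intro hkk
    rw [Set.mem_singleton_iff] at hkk
    exact hn (hkk ▸ hk)
  -- hence the orbit is finite: some positive power of `ε c` stabilizes `i`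
  obtain ⟨m, n, hmn, heq⟩ :=
    Finite.exists_ne_map_eq_of_infinite (fun n : ℕ => (⟨(ε c) ^ n • i, horbS n⟩ : S))
  wlog hlt : m < n generalizing m n
  · exact this n m hmn.symm heq.symm (by omega)
  have heq' : (ε c) ^ m • i = (ε c) ^ n • i := congrArg Subtype.val heq
  set b := ε c with hb
  have hkpos : 0 < n - m := by omega
  have hbk : b ^ (n - m) • i = i := by
    have : b ^ m • (b ^ (n - m) • i) = b ^ m • i := by
      rw [smul_smul, ← pow_add]
      rw [show m + (n - m) = n by omega]
      exact heq'.symm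
    exact smul_left_cancel _ this
  -- now conclude via almost malnormality and torsion-freeness
  by_contra hbstab
  have hbne : b ≠ 1 := by
    intro h1
    exact hbstab (by rw [h1]; simp [MulAction.mem_stabilizer_iff])
  have hk1 : b ^ (n - m) ∈ MulAction.stabilizer B i := hbk
  have hFfin := hmal i b hbstab
  have hpowmem : ∀ t : ℕ, (b ^ (n - m)) ^ t ∈
      (MulAction.stabilizer B i ⊓
        (MulAction.stabilizer B i).map (MulAut.conj b).toMonoidHom : Subgroup B) := by
    intro t
    refine ⟨pow_mem hk1 t, ⟨(b ^ (n - m)) ^ t, pow_mem hk1 t, ?_⟩⟩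
    show b * (b ^ (n - m)) ^ t * b⁻¹ = (b ^ (n - m)) ^ t
    rw [← pow_mul]
    group
  have : Finite (↥((MulAction.stabilizer B i ⊓
      (MulAction.stabilizer B i).map (MulAut.conj b).toMonoidHom : Subgroup B) : Set B)) :=
    hFfin.to_subtype
  obtain ⟨t₁, t₂, ht, heqt⟩ :=
    Finite.exists_ne_map_eq_of_infinite (fun t : ℕ => (⟨(b ^ (n - m)) ^ t, hpowmem t⟩ :
      ((MulAction.stabilizer B i ⊓
        (MulAction.stabilizer B i).map (MulAut.conj b).toMonoidHom : Subgroup B) : Set B)))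
  wlog hlt2 : t₁ < t₂ generalizing t₁ t₂
  · exact this t₂ t₁ ht.symm heqt.symm (by omega)
  have heqt' : (b ^ (n - m)) ^ t₁ = (b ^ (n - m)) ^ t₂ := congrArg Subtype.val heqt
  have hone : b ^ ((n - m) * (t₂ - t₁)) = 1 := by
    have : (b ^ (n - m)) ^ t₁ * (b ^ (n - m)) ^ (t₂ - t₁) = (b ^ (n - m)) ^ t₁ * 1 := by
      rw [← pow_add, mul_one, show t₁ + (t₂ - t₁) = t₂ by omega]
      exact heqt'.symm
    have := mul_left_cancel this
    rwa [← pow_mul] at this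
  exact htf b hbne (isOfFinOrder_iff_pow_eq_one.mpr
    ⟨(n - m) * (t₂ - t₁), Nat.mul_pos hkpos (by omega), hone⟩)
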